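/- Let q ∈ ℝⁿ be a vector, λ > 0, p = λq, let A be a real n×m matrix with Aᵀq ≠ 0, and let f ∈ ℝⁿ and Γ, Α ∈ ℝ. Then there exists u ∈ ℝᵐ satisfying both ⟨p, f + Au⟩ ≤ −Γ and ⟨q, f + Au⟩ ≥ −Α if and only if Α ≥ λ⁻¹Γ. In particular, with p = ∇V(x), q = ∇h(x), A = G(x), Γ = γ(V(x)), and Α = α(h(x)), when x lies in the critical set (∇V(x) = λ∇h(x), λ > 0) the CLF constraint ⟨∇V(x), f(x)+G(x)u⟩ ≤ −γ(V(x)) and the CBF constraint ⟨∇h(x), f(x)+G(x)u⟩ ≥ −α(h(x)) are jointly satisfiable if and only if α(h(x)) ≥ λ⁻¹γ(V(x)) = (‖∇h(x)‖/‖∇V(x)‖)·γ(V(x)). -/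

import Mathlib

open scoped RealInnerProductSpace

/-- on the critical set where `p = λq` with `λ > 0` and `Aᵀq ≠ 0`,
the CLF constraint `⟪p, f + Au⟫ ≤ -Γ` and the CBF constraint `⟪q, f + Au⟫ ≥ -Α`
are jointly satisfiable iff `Α ≥ λ⁻¹Γ`. -/
theorem stmt_10 {n m : ℕ}
    (q : EuclideanSpace ℝ (Fin n))
    (l : ℝ) (hl : 0 < l)
    (p : EuclideanSpace ℝ (Fin n)) (hp : p = l • q)
    (A : EuclideanSpace ℝ (Fin m) →L[ℝ] EuclideanSpace ℝ (Fin n))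
    (hA : A.adjoint q ≠ 0)
    (f : EuclideanSpace ℝ (Fin n))
    (Γ Alph : ℝ) :
    (∃ u : EuclideanSpace ℝ (Fin m),
        ⟪p, f + A u⟫ ≤ -Γ ∧ ⟪q, f + A u⟫ ≥ -Alph) ↔ Alph ≥ l⁻¹ * Γ := by
  constructor
  · rintro ⟨u, h1, h2⟩
    rw [hp, real_inner_smul_left] at h1
    have hs : ⟪q, f + A u⟫ ≤ -(l⁻¹ * Γ) := by
      rw [← le_div_iff₀' hl] at h1
      calc ⟪q, f + A u⟫ ≤ -Γ / l := h1
        _ = -(l⁻¹ * Γ) := by field_simp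
    have := le_trans h2.le hs  -- wrong direction? h2 : ⟪q,..⟫ ≥ -Alph
    linarith [h2, hs]
  · intro h
    set v := A.adjoint q with hv
    have hvn : (0:ℝ) < ‖v‖^2 := by have := norm_pos_iff.mpr hA; positivity
    refine ⟨((-Alph - ⟪q, f⟫) / ‖v‖^2) • v, ?_, ?_⟩
    · have key : ⟪q, f + A (((-Alph - ⟪q, f⟫) / ‖v‖^2) • v)⟫ = -Alph := by
        rw [inner_add_right, map_smul, inner_smul_right,
          ← ContinuousLinearMap.adjoint_inner_left, ← hv, real_inner_self_eq_norm_sq]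
        field_simp
        ring
      rw [hp, real_inner_smul_left, key]
      have hΓ : Γ ≤ l * Alph := by
        calc Γ = l * (l⁻¹ * Γ) := by field_simp
          _ ≤ l * Alph := by nlinarith
      linarith
    · have key : ⟪q, f + A (((-Alph - ⟪q, f⟫) / ‖v‖^2) • v)⟫ = -Alph := by
        rw [inner_add_right, map_smul, inner_smul_right,
          ← ContinuousLinearMap.adjoint_inner_left, ← hv, real_inner_self_eq_norm_sq]
        field_simp
        ring
      rw [key]
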